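/- Let 0 < r < 1, let ω > 0 be a positive invertible operator on a Hilbert space E, and let M_z be multiplication by z on H²(A_r, E, ω). Then for every f, (1+r²)‖f‖² − ‖M_z f‖² − ‖r M_z⁻¹ f‖² = 0, i.e., M_z*M_z + r²(M_z⁻¹)*M_z⁻¹ = (1+r²)I; hence M_z is an A_r-isometry. -/

import Mathlib

open scoped Real

/-- On the Hardy space `H²(A_r, E, ω)` with norm
`‖f‖² = (1/2π)∫‖f(e^{it})‖²dt + (1/2π)∫‖ω f(re^{it})‖²dt`, the multiplication operator
`M_z f(z) = z f(z)` satisfies `(1+r²)‖f‖² - ‖M_z f‖² - ‖r M_z⁻¹ f‖² = 0` for every `f`;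
i.e. `M_z*M_z + r²(M_z⁻¹)*M_z⁻¹ = (1+r²)I`, so `M_z` is an `A_r`-isometry. -/
theorem stmt14 {E : Type*} [NormedAddCommGroup E] [InnerProductSpace ℂ E] [CompleteSpace E]
    (r : ℝ) (hr0 : 0 < r) (hr1 : r < 1)
    (ω : E →L[ℂ] E) (hω : ω.IsPositive) (hωu : IsUnit ω) :
    ∀ f : ℂ → E, Continuous f →
      (1 + r ^ 2) *
          ((∫ t in (0:ℝ)..(2 * π), ‖f (Complex.exp (t * Complex.I))‖ ^ 2) / (2 * π)
            + (∫ t in (0:ℝ)..(2 * π),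
                ‖ω (f ((r : ℂ) * Complex.exp (t * Complex.I)))‖ ^ 2) / (2 * π))
        - ((∫ t in (0:ℝ)..(2 * π),
              ‖(Complex.exp (t * Complex.I)) • f (Complex.exp (t * Complex.I))‖ ^ 2) / (2 * π)
            + (∫ t in (0:ℝ)..(2 * π),
              ‖ω (((r : ℂ) * Complex.exp (t * Complex.I)) •
                  f ((r : ℂ) * Complex.exp (t * Complex.I)))‖ ^ 2) / (2 * π))
        - ((∫ t in (0:ℝ)..(2 * π),
              ‖((r : ℂ) * (Complex.exp (t * Complex.I))⁻¹) •
                  f (Complex.exp (t * Complex.I))‖ ^ 2) / (2 * π)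
            + (∫ t in (0:ℝ)..(2 * π),
              ‖ω (((r : ℂ) * ((r : ℂ) * Complex.exp (t * Complex.I))⁻¹) •
                  f ((r : ℂ) * Complex.exp (t * Complex.I)))‖ ^ 2) / (2 * π))
        = 0 := by
  intro f hf
  have habs : ∀ t : ℝ, ‖Complex.exp (↑t * Complex.I)‖ = 1 :=
    fun t => Complex.norm_exp_ofReal_mul_I t
  have hr : |r| = r := abs_of_pos hr0
  have hrne : (r : ℂ) ≠ 0 := by exact_mod_cast hr0.ne'
  have e1 : ∀ t : ℝ, ‖(Complex.exp (t * Complex.I)) • f (Complex.exp (t * Complex.I))‖ ^ 2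
      = ‖f (Complex.exp (t * Complex.I))‖ ^ 2 := by
    intro t
    rw [norm_smul, habs, one_mul]
  have e2 : ∀ t : ℝ, ‖ω (((r : ℂ) * Complex.exp (t * Complex.I)) •
      f ((r : ℂ) * Complex.exp (t * Complex.I)))‖ ^ 2
      = r ^ 2 * ‖ω (f ((r : ℂ) * Complex.exp (t * Complex.I)))‖ ^ 2 := by
    intro t
    rw [map_smul, norm_smul, norm_mul, habs, mul_one,
      Complex.norm_real, Real.norm_eq_abs, hr, mul_pow]
  have e3 : ∀ t : ℝ, ‖((r : ℂ) * (Complex.exp (t * Complex.I))⁻¹) •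
      f (Complex.exp (t * Complex.I))‖ ^ 2
      = r ^ 2 * ‖f (Complex.exp (t * Complex.I))‖ ^ 2 := by
    intro t
    rw [norm_smul, norm_mul, norm_inv, habs, inv_one, mul_one,
      Complex.norm_real, Real.norm_eq_abs, hr, mul_pow]
  have e4 : ∀ t : ℝ, ‖ω (((r : ℂ) * ((r : ℂ) * Complex.exp (t * Complex.I))⁻¹) •
      f ((r : ℂ) * Complex.exp (t * Complex.I)))‖ ^ 2
      = ‖ω (f ((r : ℂ) * Complex.exp (t * Complex.I)))‖ ^ 2 := by
    intro t
    have : (r : ℂ) * ((r : ℂ) * Complex.exp (t * Complex.I))⁻¹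
        = (Complex.exp (t * Complex.I))⁻¹ := by
      field_simp
    rw [map_smul, norm_smul, this, norm_inv, habs, inv_one, one_mul]
  simp_rw [e1, e2, e3, e4, intervalIntegral.integral_const_mul]
  ring
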